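/- For the signed random heap process with m ≥ 4 columns, consider a heap whose highest piece in column 0 is blocked by exactly one piece, lying in column 1, and mark that blocking piece. Let P̃ be the probability that the marked piece is annihilated before any piece falls in column 0, and let Ẽ be the expected number of steps until either the marked piece is annihilated or a piece falls in column 0. Then Ẽ = (1 − P̃)·m. -/

import Mathlib

open MeasureTheory ProbabilityTheory Filter
open scoped ENNReal

namespace RandomHeap

/-- A piece of a signed heap: a height (a positive integer), a column in `ZMod m`,
and a sign (`true` for `+`, `false` for `-`). -/
structure Piece (m : ℕ) where
  height : ℕ
  col : ZMod m
  sign : Bool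
deriving DecidableEq

variable {m : ℕ}

instance : MeasurableSpace (ZMod m) := ⊤
instance : MeasurableSpace (Piece m) := ⊤
instance : MeasurableSpace (Finset (Piece m)) := ⊤

/-- The defining conditions for a finite set of pieces to be a signed heap. -/
def IsHeap (H : Finset (Piece m)) : Prop :=
  (∀ p ∈ H, 1 ≤ p.height) ∧
  (∀ p ∈ H, 1 < p.height →
      ∃ q ∈ H, q.height + 1 = p.height ∧
        (q.col = p.col - 1 ∨ q.col = p.col ∨ q.col = p.col + 1)) ∧
  (∀ p ∈ H, ∀ q ∈ H, p.height = q.height + 1 → p.col = q.col → p.sign = q.sign) ∧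
  (∀ p ∈ H, ∀ q ∈ H, q.col = p.col + 1 → p.height ≠ q.height) ∧
  (∀ p ∈ H, ∀ q ∈ H, p.height = q.height → p.col = q.col → p = q)

/-- The height of the highest piece in column `j` (0 if the column is empty). -/
def colHeight (H : Finset (Piece m)) (j : ZMod m) : ℕ :=
  (H.filter fun p => p.col = j).sup Piece.height

/-- The roof of a heap: the set of removable pieces, i.e. pieces having no piece of
greater height in their own column or either adjacent column. -/
def roof (H : Finset (Piece m)) : Finset (Piece m) :=
  H.filter fun p => ∀ q ∈ H,
    (q.col = p.col - 1 ∨ q.col = p.col ∨ q.col = p.col + 1) → q.height ≤ p.height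

open scoped Classical in
/-- One step of the signed random heap dynamics: given the draw `d = (k, s)`, if the top
piece of column `k` is strictly higher than both neighbouring columns and has sign `!s`,
it is annihilated; otherwise the piece `(max (h_{k-1}, h_k, h_{k+1}) + 1, k, s)` is added. -/
noncomputable def step (H : Finset (Piece m)) (d : ZMod m × Bool) : Finset (Piece m) :=
  if max (colHeight H (d.1 - 1)) (colHeight H (d.1 + 1)) < colHeight H d.1 ∧
      (⟨colHeight H d.1, d.1, !d.2⟩ : Piece m) ∈ H then
    H.erase ⟨colHeight H d.1, d.1, !d.2⟩
  else
    insert ⟨max (colHeight H d.1) (max (colHeight H (d.1 - 1)) (colHeight H (d.1 + 1))) + 1,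
      d.1, d.2⟩ H

/-- The heap process started from `H₀` and driven by the sequence of draws `ω`. -/
noncomputable def walk (H₀ : Finset (Piece m)) (ω : ℕ → ZMod m × Bool) : ℕ → Finset (Piece m)
  | 0 => H₀
  | n + 1 => step (walk H₀ ω n) (ω n)

/-- The roof of `H` contains a piece in column `0`. -/
def hasRoofPiece0 (H : Finset (Piece m)) : Prop := ∃ p ∈ roof H, p.col = 0

/-- The draws `U` form an i.i.d. sequence, uniform over the `2 * m` possible
(column, sign) pairs. -/
def IIDUniformDraws {Ω : Type*} [MeasurableSpace Ω] (P : Measure Ω)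
    (U : ℕ → Ω → ZMod m × Bool) : Prop :=
  (∀ n, Measurable (U n)) ∧
  iIndepFun U P ∧
  ∀ n d, P {ω | U n ω = d} = ((2 * m : ℕ) : ℝ≥0∞)⁻¹

end RandomHeap

open RandomHeap

namespace RandomHeap

variable {m : ℕ}

/-- The configuration in which the highest piece of column `0` is blocked by exactly one
piece `y`: column `0` is nonempty, `y` is strictly higher than the top of column `0`,
every piece of columns `-1, 0, 1` strictly higher than the top of column `0` is `y`
itself, and `y` is unblocked (it belongs to the roof). -/
def SingleBlocker (H : Finset (Piece m)) (y : Piece m) : Prop :=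
  (∃ p ∈ H, p.col = 0) ∧ y ∈ H ∧
  colHeight H 0 < y.height ∧
  (∀ p ∈ H, (p.col = -1 ∨ p.col = 0 ∨ p.col = 1) → colHeight H 0 < p.height → p = y) ∧
  y ∈ roof H

end RandomHeap

namespace RandomHeap

open Finset

variable {m : ℕ}

instance : MeasurableSingletonClass (ZMod m) :=
  ⟨fun _ => MeasurableSpace.measurableSet_top⟩

/-- Extend a finite prefix of draws to an infinite sequence of draws. -/
def extSeq (n : ℕ) (w : Fin n → ZMod m × Bool) : ℕ → ZMod m × Bool :=
  fun i => if h : i < n then w ⟨i, h⟩ else (0, true)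

lemma walk_congr (H : Finset (Piece m)) {ω₁ ω₂ : ℕ → ZMod m × Bool} :
    ∀ n, (∀ i, i < n → ω₁ i = ω₂ i) → walk H ω₁ n = walk H ω₂ n
  | 0, _ => rfl
  | n+1, h => by
      rw [walk, walk, walk_congr H n (fun i hi => h i (hi.trans n.lt_succ_self)),
        h n n.lt_succ_self]

open scoped Classical

variable (H : Finset (Piece m)) (y : Piece m)

/-- The process, driven by the prefix `w`, has not yet stopped during the first `n`
steps: the marked piece `y` is still present and no draw fell in column `0`. -/
def ContPre (n : ℕ) (w : Fin n → ZMod m × Bool) : Prop :=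
  ∀ j : Fin n, y ∈ walk H (extSeq n w) (j.1 + 1) ∧ (w j).1 ≠ 0

/-- The process, driven by the prefix `w` of length `n+1`, runs during `n` steps and
then the marked piece `y` disappears at step `n+1`, drawn in a column `≠ 0`. -/
def AnnPre (n : ℕ) (w : Fin (n+1) → ZMod m × Bool) : Prop :=
  ContPre H y n (Fin.init w) ∧ y ∉ walk H (extSeq (n+1) w) (n+1) ∧
    (w (Fin.last n)).1 ≠ 0

noncomputable def sCnt [NeZero m] (n : ℕ) : ℕ := (univ.filter (ContPre H y n)).card
noncomputable def aCnt [NeZero m] (n : ℕ) : ℕ := (univ.filter (AnnPre H y n)).card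

lemma extSeq_snoc_lt (n : ℕ) (w : Fin n → ZMod m × Bool) (d : ZMod m × Bool)
    {i : ℕ} (hi : i < n) : extSeq (n+1) (Fin.snoc w d) i = extSeq n w i := by
  rw [extSeq, extSeq, dif_pos hi, dif_pos (hi.trans n.lt_succ_self)]
  simp [Fin.snoc, hi]

lemma walk_extSeq_snoc (n : ℕ) (w : Fin n → ZMod m × Bool) (d : ZMod m × Bool)
    {k : ℕ} (hk : k ≤ n) :
    walk H (extSeq (n+1) (Fin.snoc w d)) k = walk H (extSeq n w) k :=
  walk_congr H k (fun i hi => extSeq_snoc_lt n w d (lt_of_lt_of_le hi hk))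

lemma walk_extSeq_snoc_succ (n : ℕ) (w : Fin n → ZMod m × Bool) (d : ZMod m × Bool) :
    walk H (extSeq (n+1) (Fin.snoc w d)) (n+1)
      = step (walk H (extSeq n w) n) d := by
  rw [walk, walk_extSeq_snoc H n w d le_rfl]
  congr 1
  show extSeq (n+1) (Fin.snoc w d) n = d
  rw [extSeq, dif_pos n.lt_succ_self]
  simp [Fin.snoc]

lemma ContPre_snoc (n : ℕ) (w : Fin n → ZMod m × Bool) (d : ZMod m × Bool) :
    ContPre H y (n+1) (Fin.snoc w d) ↔
      ContPre H y n w ∧ (d.1 ≠ 0 ∧ y ∈ step (walk H (extSeq n w) n) d) := by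
  constructor
  · intro h
    refine ⟨fun j => ?_, ?_, ?_⟩
    · obtain ⟨h1, h2⟩ := h j.castSucc
      rw [Fin.snoc_castSucc] at h2
      refine ⟨?_, h2⟩
      have : (j.castSucc.1 : ℕ) = j.1 := rfl
      rw [this] at h1
      rwa [walk_extSeq_snoc H n w d (Nat.succ_le_of_lt j.2)] at h1
    · obtain ⟨-, h2⟩ := h (Fin.last n)
      rwa [Fin.snoc_last] at h2
    · obtain ⟨h1, -⟩ := h (Fin.last n)
      have : ((Fin.last n).1 : ℕ) = n := rfl
      rw [this] at h1
      rwa [walk_extSeq_snoc_succ H n w d] at h1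
  · rintro ⟨h1, h2, h3⟩ j
    refine Fin.lastCases ?_ (fun i => ?_) j
    · constructor
      · show y ∈ walk H (extSeq (n+1) (Fin.snoc w d)) (n+1)
        rwa [walk_extSeq_snoc_succ H n w d]
      · rw [Fin.snoc_last]; exact h2
    · obtain ⟨g1, g2⟩ := h1 i
      constructor
      · show y ∈ walk H (extSeq (n+1) (Fin.snoc w d)) (i.1+1)
        rwa [walk_extSeq_snoc H n w d (Nat.succ_le_of_lt i.2)]
      · rw [Fin.snoc_castSucc]; exact g2

lemma AnnPre_snoc (n : ℕ) (w : Fin n → ZMod m × Bool) (d : ZMod m × Bool) :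
    AnnPre H y n (Fin.snoc w d) ↔
      ContPre H y n w ∧ (d.1 ≠ 0 ∧ y ∉ step (walk H (extSeq n w) n) d) := by
  rw [AnnPre, Fin.init_snoc, Fin.snoc_last, walk_extSeq_snoc_succ H n w d]
  tauto

end RandomHeap
namespace RandomHeap

open Finset

open scoped Classical

variable {m : ℕ} (H : Finset (Piece m)) (y : Piece m)

lemma card_snoc_split (n : ℕ) [NeZero m]
    (Pred : (Fin (n+1) → ZMod m × Bool) → Prop)
    (C : (Fin n → ZMod m × Bool) → ZMod m × Bool → Prop)
    [inst : ∀ w, DecidablePred (C w)]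
    (h : ∀ w d, Pred (Fin.snoc w d) ↔ ContPre H y n w ∧ C w d) :
    (univ.filter Pred).card
      = ∑ w ∈ univ.filter (ContPre H y n), (univ.filter (C w)).card := by
  let e : ((Fin n → ZMod m × Bool) × (ZMod m × Bool)) ≃ (Fin (n+1) → ZMod m × Bool) :=
    { toFun := fun p => Fin.snoc p.1 p.2
      invFun := fun w => (Fin.init w, w (Fin.last n))
      left_inv := fun p => by simp [Fin.init_snoc, Fin.snoc_last]
      right_inv := fun w => by simp [Fin.snoc_init_self] }
  have hcard : (univ.filter (fun p : (Fin n → ZMod m × Bool) × (ZMod m × Bool) =>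
      ContPre H y n p.1 ∧ C p.1 p.2)).card = (univ.filter Pred).card := by
    refine Finset.card_equiv e (fun p => ?_)
    simp only [mem_filter, mem_univ, true_and]
    show _ ↔ Pred (Fin.snoc p.1 p.2)
    exact (h p.1 p.2).symm
  rw [← hcard, Finset.card_filter, ← Finset.univ_product_univ, Finset.sum_product,
    Finset.sum_filter]
  refine Finset.sum_congr rfl (fun w _ => ?_)
  by_cases hw : ContPre H y n w
  · simp only [hw, true_and, if_true, Finset.card_filter]
  · simp [hw]

lemma card_univ_draws [NeZero m] :
    (univ : Finset (ZMod m × Bool)).card = 2 * m := by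
  rw [Finset.card_univ, Fintype.card_prod, ZMod.card, Fintype.card_bool]
  ring

lemma card_col0 [NeZero m] :
    (univ.filter (fun d : ZMod m × Bool => d.1 = 0)).card = 2 := by
  have : (univ.filter (fun d : ZMod m × Bool => d.1 = 0))
      = {((0 : ZMod m), false), ((0 : ZMod m), true)} := by
    ext ⟨x, b⟩
    simp only [mem_filter, mem_univ, true_and, mem_insert, mem_singleton, Prod.mk.injEq]
    cases b <;> simp
  rw [this]
  rw [Finset.card_insert_of_notMem (by simp), Finset.card_singleton]

lemma card_draw_split [NeZero m] (W : Finset (Piece m)) :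
    (univ.filter (fun d : ZMod m × Bool => d.1 ≠ 0 ∧ y ∈ step W d)).card
      + (univ.filter (fun d : ZMod m × Bool => d.1 ≠ 0 ∧ y ∉ step W d)).card
      + 2 = 2 * m := by
  have h1 := Finset.card_filter_add_card_filter_not
    (s := (univ : Finset (ZMod m × Bool))) (p := fun d => d.1 = 0)
  have h2 := Finset.card_filter_add_card_filter_not
    (s := univ.filter (fun d : ZMod m × Bool => ¬ d.1 = 0))
    (p := fun d : ZMod m × Bool => y ∈ step W d)
  rw [Finset.filter_filter, Finset.filter_filter] at h2
  rw [card_univ_draws] at h1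
  have e1 : (univ.filter (fun d : ZMod m × Bool => d.1 ≠ 0 ∧ y ∈ step W d))
      = (univ.filter fun d : ZMod m × Bool => ¬ d.1 = 0 ∧ y ∈ step W d) := by
    simp only [ne_eq]
  have e2 : (univ.filter (fun d : ZMod m × Bool => d.1 ≠ 0 ∧ y ∉ step W d))
      = (univ.filter fun d : ZMod m × Bool => ¬ d.1 = 0 ∧ ¬ y ∈ step W d) := by
    simp only [ne_eq]
  rw [e1, e2, h2]
  have := card_col0 (m := m)
  omega

lemma cnt_rec [NeZero m] (n : ℕ) :
    sCnt H y (n+1) + aCnt H y n + 2 * sCnt H y n = 2 * m * sCnt H y n := by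
  have hs : sCnt H y (n+1) = ∑ w ∈ univ.filter (ContPre H y n),
      (univ.filter (fun d : ZMod m × Bool =>
        d.1 ≠ 0 ∧ y ∈ step (walk H (extSeq n w) n) d)).card :=
    card_snoc_split H y n _ _ (fun w d => ContPre_snoc H y n w d)
  have ha : aCnt H y n = ∑ w ∈ univ.filter (ContPre H y n),
      (univ.filter (fun d : ZMod m × Bool =>
        d.1 ≠ 0 ∧ y ∉ step (walk H (extSeq n w) n) d)).card :=
    card_snoc_split H y n _ _ (fun w d => AnnPre_snoc H y n w d)
  have h2 : 2 * sCnt H y n = ∑ w ∈ univ.filter (ContPre H y n), 2 := by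
    rw [Finset.sum_const, smul_eq_mul, sCnt, mul_comm]
  rw [hs, ha, h2, ← Finset.sum_add_distrib, ← Finset.sum_add_distrib]
  have : ∀ w ∈ univ.filter (ContPre H y n),
      (univ.filter (fun d : ZMod m × Bool =>
        d.1 ≠ 0 ∧ y ∈ step (walk H (extSeq n w) n) d)).card
      + (univ.filter (fun d : ZMod m × Bool =>
        d.1 ≠ 0 ∧ y ∉ step (walk H (extSeq n w) n) d)).card + 2 = 2 * m :=
    fun w _ => card_draw_split y (walk H (extSeq n w) n)
  rw [Finset.sum_congr rfl this, Finset.sum_const, smul_eq_mul, sCnt, mul_comm]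

lemma card_ne0 [NeZero m] :
    (univ.filter (fun d : ZMod m × Bool => (d.1 ≠ 0 : Prop))).card = 2 * m - 2 := by
  have h1 := Finset.card_filter_add_card_filter_not
    (s := (univ : Finset (ZMod m × Bool))) (p := fun d => d.1 = 0)
  rw [card_univ_draws, card_col0] at h1
  have : (univ.filter (fun d : ZMod m × Bool => (d.1 ≠ 0 : Prop)))
      = (univ.filter fun d : ZMod m × Bool => ¬ d.1 = 0) := by simp only [ne_eq]
  rw [this]
  omega

lemma sCnt_le [NeZero m] (n : ℕ) : sCnt H y n ≤ (2 * m - 2) ^ n := by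
  have hsub : univ.filter (ContPre H y n)
      ⊆ Fintype.piFinset (fun _ : Fin n =>
          univ.filter (fun d : ZMod m × Bool => (d.1 ≠ 0 : Prop))) := by
    intro w hw
    simp only [mem_filter, mem_univ, true_and] at hw
    rw [Fintype.mem_piFinset]
    intro j
    simp only [mem_filter, mem_univ, true_and]
    exact (hw j).2
  calc sCnt H y n ≤ _ := Finset.card_le_card hsub
  _ = (2 * m - 2) ^ n := by
      rw [Fintype.card_piFinset]
      simp [card_ne0]

lemma sCnt_zero [NeZero m] : sCnt H y 0 = 1 := by
  rw [sCnt]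
  have : (univ.filter (ContPre H y 0)) = univ :=
    Finset.filter_true_of_mem (fun w _ => fun j => j.elim0)
  rw [this, Finset.card_univ]
  simp

end RandomHeap
namespace RandomHeap

open Finset

open scoped Classical

variable {m : ℕ} {Ω : Type*} [MeasurableSpace Ω] {P : Measure Ω}
  {U : ℕ → Ω → ZMod m × Bool}

lemma cyl_eq (U : ℕ → Ω → ZMod m × Bool) (n : ℕ) (w : Fin n → ZMod m × Bool) :
    {ω | ∀ j : Fin n, U j ω = w j}
      = ⋂ i ∈ Finset.range n, U i ⁻¹' {extSeq n w i} := by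
  ext ω
  simp only [Set.mem_setOf_eq, Set.mem_iInter, Finset.mem_range, Set.mem_preimage,
    Set.mem_singleton_iff]
  constructor
  · intro h i hi
    rw [extSeq, dif_pos hi]
    exact h ⟨i, hi⟩
  · intro h j
    have := h j.1 j.2
    rwa [extSeq, dif_pos j.2] at this

lemma cyl_measurable (hU : IIDUniformDraws P U) (n : ℕ) (w : Fin n → ZMod m × Bool) :
    MeasurableSet {ω | ∀ j : Fin n, U j ω = w j} := by
  rw [cyl_eq]
  exact MeasurableSet.biInter (Finset.range n).countable_toSet
    (fun i _ => (hU.1 i) (measurableSet_singleton _))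

lemma cyl_measure (hU : IIDUniformDraws P U) (n : ℕ) (w : Fin n → ZMod m × Bool) :
    P {ω | ∀ j : Fin n, U j ω = w j} = (((2 * m : ℕ) : ℝ≥0∞)⁻¹) ^ n := by
  rw [cyl_eq]
  rw [hU.2.1.meas_biInter (fun i _ => ⟨{extSeq n w i}, measurableSet_singleton _, rfl⟩)]
  have : ∀ i ∈ Finset.range n, P (U i ⁻¹' {extSeq n w i}) = ((2 * m : ℕ) : ℝ≥0∞)⁻¹ :=
    fun i _ => hU.2.2 i (extSeq n w i)
  rw [Finset.prod_congr rfl this, Finset.prod_const, Finset.card_range]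

lemma prefix_event_eq [NeZero m] (U : ℕ → Ω → ZMod m × Bool) (n : ℕ)
    (Qp : (Fin n → ZMod m × Bool) → Prop) :
    {ω | Qp (fun j => U j ω)}
      = ⋃ w ∈ univ.filter Qp, {ω | ∀ j : Fin n, U j ω = w j} := by
  ext ω
  simp only [Set.mem_setOf_eq, Set.mem_iUnion, Finset.mem_filter, Finset.mem_univ,
    true_and, exists_prop]
  constructor
  · intro h
    exact ⟨fun j => U j ω, h, fun j => rfl⟩
  · rintro ⟨w, hw, he⟩
    have : (fun j : Fin n => U j ω) = w := funext he
    rwa [this]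

lemma prefix_event_measurable [NeZero m] (hU : IIDUniformDraws P U) (n : ℕ)
    (Qp : (Fin n → ZMod m × Bool) → Prop) :
    MeasurableSet {ω | Qp (fun j => U j ω)} := by
  rw [prefix_event_eq]
  exact (univ.filter Qp).measurableSet_biUnion (fun w _ => cyl_measurable hU n w)

lemma prefix_event_measure [NeZero m] (hU : IIDUniformDraws P U) (n : ℕ)
    (Qp : (Fin n → ZMod m × Bool) → Prop) :
    P {ω | Qp (fun j => U j ω)}
      = ((univ.filter Qp).card : ℝ≥0∞) * (((2 * m : ℕ) : ℝ≥0∞)⁻¹) ^ n := by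
  rw [prefix_event_eq]
  rw [measure_biUnion_finset ?_ (fun w _ => cyl_measurable hU n w)]
  · rw [Finset.sum_congr rfl (fun w _ => cyl_measure hU n w), Finset.sum_const,
      nsmul_eq_mul]
  · intro w _ w' _ hne
    rw [Function.onFun]
    rw [Set.disjoint_left]
    intro ω hw hw'
    exact hne (funext fun j => (hw j).symm.trans (hw' j))

end RandomHeap
namespace RandomHeap

variable {m : ℕ} {Ω : Type*} (H : Finset (Piece m)) (y : Piece m)
  (U : ℕ → Ω → ZMod m × Bool) (ω : Ω)

lemma extSeq_walk_agree (n : ℕ) {k : ℕ} (hk : k ≤ n) :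
    walk H (extSeq n (fun j : Fin n => U j ω)) k = walk H (fun i => U i ω) k :=
  walk_congr H k (fun i hi => by
    rw [extSeq, dif_pos (lt_of_lt_of_le hi hk)])

lemma ContPre_iff (n : ℕ) :
    ContPre H y n (fun j : Fin n => U j ω) ↔
      ∀ j, j < n → (y ∈ walk H (fun i => U i ω) (j+1) ∧ (U j ω).1 ≠ 0) := by
  constructor
  · intro h j hj
    obtain ⟨h1, h2⟩ := h ⟨j, hj⟩
    rw [extSeq_walk_agree H U ω n (Nat.succ_le_of_lt hj)] at h1
    exact ⟨h1, h2⟩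
  · intro h j
    obtain ⟨h1, h2⟩ := h j.1 j.2
    refine ⟨?_, h2⟩
    rwa [extSeq_walk_agree H U ω n (Nat.succ_le_of_lt j.2)]

lemma AnnPre_iff (n : ℕ) :
    AnnPre H y n (fun j : Fin (n+1) => U j ω) ↔
      (∀ j, j < n → (y ∈ walk H (fun i => U i ω) (j+1) ∧ (U j ω).1 ≠ 0)) ∧
        y ∉ walk H (fun i => U i ω) (n+1) ∧ (U n ω).1 ≠ 0 := by
  have hinit : Fin.init (fun j : Fin (n+1) => U j ω) = (fun j : Fin n => U j ω) := by
    funext i; rfl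
  rw [AnnPre, hinit, ContPre_iff H y U ω n,
    extSeq_walk_agree H U ω (n+1) le_rfl]
  rfl

end RandomHeap
/-- For the signed random heap process with `m ≥ 4` columns, consider a
heap whose highest piece in column `0` is blocked by exactly one piece `y`, lying in
column `1`, and mark that blocking piece.  Let `P̃` be the probability that the marked
piece is annihilated before any piece falls in column `0`, and let `Ẽ` be the expected
number of steps until either the marked piece is annihilated or a piece falls in column
`0`.  Then `Ẽ = (1 - P̃) · m`. -/
theorem single_blocker_expected_stopping_time (m : ℕ) (hm : 4 ≤ m)
    {Ω : Type*} [MeasurableSpace Ω] (P : Measure Ω) [IsProbabilityMeasure P]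
    (U : ℕ → Ω → ZMod m × Bool) (hU : IIDUniformDraws P U)
    (H : Finset (Piece m)) (hH : IsHeap H)
    (y : Piece m) (hy : SingleBlocker H y) (hcol : y.col = 1) :
    ∫ ω, ((1 + sInf {n : ℕ | y ∉ walk H (fun i => U i ω) (n + 1) ∨ (U n ω).1 = 0} : ℕ) : ℝ) ∂P
      = (1 - (P {ω | ∃ n : ℕ, y ∉ walk H (fun i => U i ω) n ∧
          ∀ t < n, (U t ω).1 ≠ 0}).toReal) * m := by
  classical
  haveI : NeZero m := ⟨by omega⟩
  have hyH : y ∈ H := hy.2.1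
  set c : ℝ≥0∞ := ((2 * m : ℕ) : ℝ≥0∞)⁻¹ with hc
  have h2m0 : ((2 * m : ℕ) : ℝ≥0∞) ≠ 0 := by
    simp only [ne_eq, Nat.cast_eq_zero]; omega
  have h2mtop : ((2 * m : ℕ) : ℝ≥0∞) ≠ ∞ := ENNReal.natCast_ne_top _
  have hc0 : c ≠ 0 := ENNReal.inv_ne_zero.2 h2mtop
  have hctop : c ≠ ∞ := ENNReal.inv_ne_top.2 h2m0
  have h2mc : ((2 * m : ℕ) : ℝ≥0∞) * c = 1 := ENNReal.mul_inv_cancel h2m0 h2mtop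
  have h2mc' : (2 : ℝ≥0∞) * (m : ℝ≥0∞) * c = 1 := by
    rw [← h2mc]; congr 1; push_cast; ring
  set p : ℕ → ℝ≥0∞ := fun n => (sCnt H y n : ℝ≥0∞) * c ^ n with hp
  set q : ℕ → ℝ≥0∞ := fun n => (aCnt H y n : ℝ≥0∞) * c ^ (n + 1) with hq
  -- measures of the basic events
  have hPCont : ∀ n, P {ω | ContPre H y n (fun j : Fin n => U j ω)} = p n := by
    intro n
    rw [prefix_event_measure hU n (ContPre H y n)]
    rfl
  have hPAnn : ∀ n, P {ω | AnnPre H y n (fun j : Fin (n+1) => U j ω)} = q n := by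
    intro n
    rw [prefix_event_measure hU (n+1) (AnnPre H y n)]
    rfl
  -- the one-step recurrence
  have hrec : ∀ n, p (n + 1) + q n + 2 * c * p n = p n := by
    intro n
    have h : sCnt H y (n+1) + aCnt H y n + 2 * sCnt H y n = 2 * m * sCnt H y n :=
      cnt_rec H y n
    have e2 : ((sCnt H y (n+1) + aCnt H y n + 2 * sCnt H y n : ℕ) : ℝ≥0∞)
        = ((2 * m * sCnt H y n : ℕ) : ℝ≥0∞) := by rw [h]
    calc p (n + 1) + q n + 2 * c * p n
        = ((sCnt H y (n+1) + aCnt H y n + 2 * sCnt H y n : ℕ) : ℝ≥0∞) * c ^ (n+1) := by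
          simp only [hp, hq]
          push_cast
          rw [pow_succ']
          ring
      _ = ((2 * m * sCnt H y n : ℕ) : ℝ≥0∞) * c ^ (n+1) := by rw [e2]
      _ = p n := by
          simp only [hp]
          push_cast
          rw [pow_succ']
          calc (2 : ℝ≥0∞) * (m : ℝ≥0∞) * (sCnt H y n : ℝ≥0∞) * (c * c ^ n)
              = ((2 : ℝ≥0∞) * (m : ℝ≥0∞) * c) * ((sCnt H y n : ℝ≥0∞) * c ^ n) := by ring
            _ = (sCnt H y n : ℝ≥0∞) * c ^ n := by rw [h2mc', one_mul]
  -- geometric domination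
  set r : ℝ≥0∞ := ((2 * m - 2 : ℕ) : ℝ≥0∞) * c with hr
  have hple : ∀ n, p n ≤ r ^ n := by
    intro n
    rw [hr, mul_pow, hp]
    refine mul_le_mul_left ?_ _
    rw [← Nat.cast_pow, Nat.cast_le]
    exact sCnt_le H y n
  have hrlt1 : r < 1 := by
    rw [hr, ← h2mc]
    rw [ENNReal.mul_lt_mul_iff_left hc0 hctop, Nat.cast_lt]
    omega
  have hgeo_ne : (∑' n, r ^ n) ≠ ∞ := by
    rw [ENNReal.tsum_geometric]
    rw [Ne, ENNReal.inv_eq_top, tsub_eq_zero_iff_le]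
    exact hrlt1.not_ge
  set E : ℝ≥0∞ := ∑' n, p n with hE
  have hE_ne : E ≠ ∞ := ne_top_of_le_ne_top hgeo_ne (ENNReal.tsum_le_tsum hple)
  have hp0 : p 0 = 1 := by
    simp only [hp, pow_zero, mul_one, sCnt_zero H y, Nat.cast_one]
  -- sum the recurrence
  set Qs : ℝ≥0∞ := ∑' n, q n with hQs
  have hkey : Qs + 2 * c * E = 1 := by
    have hsum : (∑' n, p (n + 1)) + Qs + 2 * c * E = E := by
      rw [hQs, hE, ← ENNReal.tsum_mul_left, ← ENNReal.tsum_add, ← ENNReal.tsum_add]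
      exact tsum_congr hrec
    have hE01 : E = 1 + ∑' n, p (n + 1) := by
      rw [hE, tsum_eq_zero_add' ENNReal.summable, hp0]
    have hT_ne : (∑' n, p (n + 1)) ≠ ∞ := by
      refine ne_top_of_le_ne_top hE_ne ?_
      rw [hE01]
      exact le_add_self
    have : (∑' n, p (n + 1)) + (Qs + 2 * c * E) = (∑' n, p (n + 1)) + 1 := by
      rw [← add_assoc, hsum, hE01, add_comm]
    exact (ENNReal.add_right_inj hT_ne).1 this
  have hQs_ne : Qs ≠ ∞ :=
    ne_top_of_le_ne_top ENNReal.one_ne_top (hkey ▸ le_self_add)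
  -- identification of P̃
  have hPt : P {ω | ∃ n : ℕ, y ∉ walk H (fun i => U i ω) n ∧
      ∀ t < n, (U t ω).1 ≠ 0} = Qs := by
    have hset : {ω | ∃ n : ℕ, y ∉ walk H (fun i => U i ω) n ∧ ∀ t < n, (U t ω).1 ≠ 0}
        = ⋃ n, {ω | AnnPre H y n (fun j : Fin (n+1) => U j ω)} := by
      ext ω
      simp only [Set.mem_setOf_eq, Set.mem_iUnion]
      constructor
      · rintro ⟨N, hN1, hN2⟩
        have hne : {k : ℕ | y ∉ walk H (fun i => U i ω) k}.Nonempty := ⟨N, hN1⟩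
        have hmem : sInf {k : ℕ | y ∉ walk H (fun i => U i ω) k}
            ∈ {k : ℕ | y ∉ walk H (fun i => U i ω) k} := Nat.sInf_mem hne
        have hN0pos : sInf {k : ℕ | y ∉ walk H (fun i => U i ω) k} ≠ 0 := by
          intro h0
          rw [h0] at hmem
          exact hmem hyH
        obtain ⟨n, hn⟩ : ∃ n, sInf {k : ℕ | y ∉ walk H (fun i => U i ω) k} = n + 1 :=
          ⟨sInf {k : ℕ | y ∉ walk H (fun i => U i ω) k} - 1, by omega⟩
        have hle : sInf {k : ℕ | y ∉ walk H (fun i => U i ω) k} ≤ N := Nat.sInf_le hN1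
        refine ⟨n, (AnnPre_iff H y U ω n).2 ⟨?_, ?_, ?_⟩⟩
        · intro j hj
          refine ⟨?_, hN2 j (by omega)⟩
          by_contra hnot
          have := Nat.sInf_le (s := {k : ℕ | y ∉ walk H (fun i => U i ω) k}) hnot
          omega
        · rw [← hn]; exact hmem
        · exact hN2 n (by omega)
      · rintro ⟨n, hn⟩
        obtain ⟨h1, h2, h3⟩ := (AnnPre_iff H y U ω n).1 hn
        refine ⟨n + 1, h2, fun t ht => ?_⟩
        by_cases h : t < n
        · exact (h1 t h).2
        · have het : t = n := by omega
          rw [het]; exact h3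
    rw [hset, measure_iUnion ?_ (fun n => prefix_event_measurable hU (n+1) (AnnPre H y n))]
    · exact tsum_congr hPAnn
    · have key : ∀ a b : ℕ, a < b → Disjoint
          {ω | AnnPre H y a (fun j : Fin (a+1) => U j ω)}
          {ω | AnnPre H y b (fun j : Fin (b+1) => U j ω)} := by
        intro a b hab
        rw [Set.disjoint_left]
        intro ω ha hb
        obtain ⟨-, h2, -⟩ := (AnnPre_iff H y U ω a).1 ha
        obtain ⟨h1, -, -⟩ := (AnnPre_iff H y U ω b).1 hb
        exact h2 (h1 a hab).1
      intro a b hab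
      rcases lt_or_gt_of_ne hab with h | h
      · exact key a b h
      · exact (key b a h).symm
  -- identification of the expectation
  have hInt : ∫ ω, ((1 + sInf {n : ℕ | y ∉ walk H (fun i => U i ω) (n + 1)
      ∨ (U n ω).1 = 0} : ℕ) : ℝ) ∂P = E.toReal := by
    set SS : Ω → Set ℕ :=
      fun ω => {n : ℕ | y ∉ walk H (fun i => U i ω) (n + 1) ∨ (U n ω).1 = 0} with hSS
    set g : Ω → ℕ := fun ω => 1 + sInf (SS ω) with hg
    have hnotmem : ∀ ω (j : ℕ), j ∉ SS ω ↔
        (y ∈ walk H (fun i => U i ω) (j+1) ∧ (U j ω).1 ≠ 0) := by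
      intro ω j
      simp only [hSS, Set.mem_setOf_eq, not_or, not_not]
    have hCiff : ∀ ω (n : ℕ), ContPre H y n (fun j : Fin n => U j ω) ↔
        ∀ j, j < n → j ∉ SS ω := by
      intro ω n
      rw [ContPre_iff H y U ω n]
      exact forall₂_congr (fun j hj => (hnotmem ω j).symm)
    have hBadMeas : ∀ k : ℕ, MeasurableSet {ω | k ∈ SS ω} := by
      intro k
      have : {ω | k ∈ SS ω} = {ω | (fun w : Fin (k+1) → ZMod m × Bool =>
          y ∉ walk H (extSeq (k+1) w) (k+1) ∨ (w (Fin.last k)).1 = 0) (fun j => U j ω)} := by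
        ext ω
        simp only [hSS, Set.mem_setOf_eq]
        rw [extSeq_walk_agree H U ω (k+1) le_rfl]
        rfl
      rw [this]
      exact prefix_event_measurable hU (k+1) (fun w : Fin (k+1) → ZMod m × Bool =>
        y ∉ walk H (extSeq (k+1) w) (k+1) ∨ (w (Fin.last k)).1 = 0)
    have hContMeas : ∀ n : ℕ, MeasurableSet {ω | ContPre H y n (fun j : Fin n => U j ω)} :=
      fun n => prefix_event_measurable hU n _
    have hlt0 : {ω | 0 < g ω} = Set.univ := by
      ext ω
      simp only [Set.mem_setOf_eq, Set.mem_univ, iff_true, hg]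
      omega
    have hltS : ∀ n : ℕ, {ω | n + 1 < g ω} =
        {ω | ContPre H y (n+1) (fun j : Fin (n+1) => U j ω)} ∩ ⋃ k, {ω | k ∈ SS ω} := by
      intro n
      ext ω
      simp only [Set.mem_setOf_eq, Set.mem_inter_iff, Set.mem_iUnion]
      rw [hCiff ω (n+1)]
      have hgw : g ω = 1 + sInf (SS ω) := by rw [hg]
      constructor
      · intro hlt
        have hne : (SS ω).Nonempty := by
          by_contra he
          rw [Set.not_nonempty_iff_eq_empty] at he
          rw [he, Nat.sInf_empty] at hgw
          omega
        exact ⟨fun j hj => Nat.notMem_of_lt_sInf (by omega), hne⟩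
      · rintro ⟨hC, k, hk⟩
        have hmem := Nat.sInf_mem (⟨k, hk⟩ : (SS ω).Nonempty)
        have hnlt : ¬ sInf (SS ω) < n + 1 := fun hlt' => hC _ hlt' hmem
        omega
    have hmeas_lt : ∀ n : ℕ, MeasurableSet {ω | n < g ω} := by
      intro n
      cases n with
      | zero => rw [hlt0]; exact MeasurableSet.univ
      | succ k =>
          rw [hltS k]
          exact (hContMeas (k+1)).inter (MeasurableSet.iUnion (fun j => hBadMeas j))
    have hPlt : ∀ n : ℕ, P {ω | n < g ω} = p n := by
      intro n
      cases n with
      | zero => rw [hlt0, measure_univ, hp0]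
      | succ n =>
          have hsub : {ω | n + 1 < g ω}
              ⊆ {ω | ContPre H y (n+1) (fun j : Fin (n+1) => U j ω)} := by
            rw [hltS n]
            exact Set.inter_subset_left
          have hD : {ω | ContPre H y (n+1) (fun j : Fin (n+1) => U j ω)}
              \ {ω | n + 1 < g ω}
              ⊆ ⋂ k, {ω | ContPre H y k (fun j : Fin k => U j ω)} := by
            rintro ω ⟨h1, h2⟩
            have hSSe : ∀ j : ℕ, j ∉ SS ω := by
              intro j hj
              exact h2 (by rw [hltS n]; exact ⟨h1, Set.mem_iUnion.2 ⟨j, hj⟩⟩)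
            exact Set.mem_iInter.2 (fun k => (hCiff ω k).2 (fun j _ => hSSe j))
          have hDnull : P ({ω | ContPre H y (n+1) (fun j : Fin (n+1) => U j ω)}
              \ {ω | n + 1 < g ω}) = 0 := by
            have hb : ∀ k : ℕ, P ({ω | ContPre H y (n+1) (fun j : Fin (n+1) => U j ω)}
                \ {ω | n + 1 < g ω}) ≤ r ^ k := by
              intro k
              refine le_trans (measure_mono (hD.trans (Set.iInter_subset _ k))) ?_
              rw [hPCont k]
              exact hple k
            have := ge_of_tendsto'
              (ENNReal.tendsto_pow_atTop_nhds_zero_of_lt_one hrlt1) hb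
            exact le_antisymm this zero_le
          refine le_antisymm ?_ ?_
          · rw [← hPCont (n+1)]
            exact measure_mono hsub
          · rw [← hPCont (n+1)]
            calc P {ω | ContPre H y (n+1) (fun j : Fin (n+1) => U j ω)}
                ≤ P ({ω | n + 1 < g ω} ∪ ({ω | ContPre H y (n+1) (fun j : Fin (n+1) => U j ω)}
                    \ {ω | n + 1 < g ω})) := by
                  refine measure_mono (fun ω hω => ?_)
                  by_cases hn : ω ∈ {ω | n + 1 < g ω}
                  · exact Or.inl hn
                  · exact Or.inr ⟨hω, hn⟩
              _ ≤ P {ω | n + 1 < g ω} + P ({ω | ContPre H y (n+1) (fun j : Fin (n+1) => U j ω)}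
                    \ {ω | n + 1 < g ω}) := measure_union_le _ _
              _ = P {ω | n + 1 < g ω} := by rw [hDnull, add_zero]
    have hgmeas : Measurable g := by
      apply measurable_to_countable'
      intro k
      cases k with
      | zero =>
          have : g ⁻¹' {0} = ∅ := by
            ext ω
            simp only [Set.mem_preimage, Set.mem_singleton_iff, Set.mem_empty_iff_false,
              iff_false, hg]
            omega
          rw [this]
          exact MeasurableSet.empty
      | succ k =>
          have : g ⁻¹' {k+1} = {ω | k < g ω} \ {ω | k + 1 < g ω} := by
            ext ω
            simp only [Set.mem_preimage, Set.mem_singleton_iff, Set.mem_diff,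
              Set.mem_setOf_eq]
            omega
          rw [this]
          exact (hmeas_lt k).diff (hmeas_lt (k+1))
    have hpt : ∀ ω, ((g ω : ℝ≥0∞))
        = ∑' n : ℕ, Set.indicator {ω' | n < g ω'} (1 : Ω → ℝ≥0∞) ω := by
      intro ω
      have h1 : ∀ n : ℕ, Set.indicator {ω' | n < g ω'} (1 : Ω → ℝ≥0∞) ω
          = if n < g ω then 1 else 0 := fun n => by
        rw [Set.indicator_apply]
        rfl
      rw [tsum_congr h1, tsum_eq_sum (s := Finset.range (g ω))
        (fun n hn => if_neg (by simpa using hn))]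
      rw [Finset.sum_congr rfl (fun n hn => if_pos (Finset.mem_range.1 hn)),
        Finset.sum_const, Finset.card_range, nsmul_eq_mul, mul_one]
    have hlin : ∫⁻ ω, ((g ω : ℕ) : ℝ≥0∞) ∂P = E := by
      rw [lintegral_congr hpt,
        lintegral_tsum (fun n => (measurable_one.indicator (hmeas_lt n)).aemeasurable), hE]
      exact tsum_congr (fun n => by rw [lintegral_indicator_one (hmeas_lt n)]; exact hPlt n)
    show ∫ ω, ((g ω : ℕ) : ℝ) ∂P = E.toReal
    have hmg : Measurable (fun ω => ((g ω : ℕ) : ℝ)) :=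
      (measurable_of_countable (fun k : ℕ => (k : ℝ))).comp hgmeas
    rw [integral_eq_lintegral_of_nonneg_ae (ae_of_all _ (fun ω => by positivity))
      hmg.aestronglyMeasurable]
    rw [← hlin]
    congr 1
    apply lintegral_congr
    intro ω
    rw [ENNReal.ofReal_natCast]
  -- final arithmetic
  rw [hInt, hPt]
  have h2c : 2 * c = ((m : ℝ≥0∞))⁻¹ := by
    rw [hc]
    push_cast
    rw [ENNReal.mul_inv (Or.inl two_ne_zero) (Or.inl ENNReal.ofNat_ne_top)]
    rw [← mul_assoc, ENNReal.mul_inv_cancel two_ne_zero ENNReal.ofNat_ne_top, one_mul]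
  rw [h2c] at hkey
  have hmE_ne : ((m : ℝ≥0∞))⁻¹ * E ≠ ∞ :=
    ENNReal.mul_ne_top (ENNReal.inv_ne_top.2 (by simp [NeZero.ne m])) hE_ne
  have := congrArg ENNReal.toReal hkey
  rw [ENNReal.toReal_add hQs_ne hmE_ne, ENNReal.toReal_mul, ENNReal.toReal_inv,
    ENNReal.toReal_natCast, ENNReal.toReal_one] at this
  have hmR : (m : ℝ) ≠ 0 := by simp; omega
  field_simp at this ⊢
  linarith
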